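/- Let n, m be positive integers, U an m×n complex matrix with U·Ū ᵀ = I_m, and let u ∈ ℂ^{mn} be the vector obtained by concatenating the rows of U. Set j ∈ {1,…,mn} and let L = −(n/j)·I_{mn} + (n/j)²·ūᵀ·u. Then the sum of all j×j principal minors of L equals [C(mn,j)·(1 − (n/j)·u·ūᵀ) + C(mn,j)·(n(mn−j)/(j·mn))·m]·(−n/j)^j, which equals 0 (using u·ūᵀ = m). -/

import Mathlib

open Complex Matrix

lemma det_aux {ι : Type*} [Fintype ι] [DecidableEq ι] (a : ℂ) (ha : a ≠ 0) (v w : ι → ℂ) :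
    det (a • (1 : Matrix ι ι ℂ) + Matrix.of (fun i k => v i * w k)) =
      a ^ (Fintype.card ι) + a ^ (Fintype.card ι - 1) * ∑ i, v i * w i := by
  have h1 : a • (1 : Matrix ι ι ℂ) + Matrix.of (fun i k => v i * w k)
      = a • ((1 : Matrix ι ι ℂ) + replicateCol Unit v * replicateRow Unit (fun k => a⁻¹ * w k)) := by
    ext i k
    simp only [Matrix.add_apply, Matrix.smul_apply, Matrix.of_apply, smul_add, smul_eq_mul,
      Matrix.mul_apply, Finset.univ_unique, Finset.sum_singleton, replicateCol_apply, replicateRow_apply]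
    field_simp
  rw [h1, det_smul, det_one_add_replicateCol_mul_replicateRow, Fintype.card, dotProduct]
  rcases Nat.eq_zero_or_pos (Finset.univ (α := ι)).card with h | h
  · have : (Finset.univ : Finset ι) = ∅ := Finset.card_eq_zero.mp h
    simp [this, h]
  · have h2 : a ^ (Finset.univ (α := ι)).card = a * a ^ ((Finset.univ (α := ι)).card - 1) := by
      rw [← pow_succ']; congr 1; omega
    rw [Finset.mul_sum, mul_add, mul_one, Finset.mul_sum]
    congr 1
    apply Finset.sum_congr rfl
    intro i _
    rw [h2]
    field_simp

lemma count_aux {N j : ℕ} (hj1 : 1 ≤ j) (k : Fin N) :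
    ((Finset.univ.powersetCard j).filter (fun s => k ∈ s)).card = Nat.choose (N-1) (j-1) := by
  have : ((Finset.univ.erase k).powersetCard (j-1)).card = Nat.choose (N-1) (j-1) := by
    rw [Finset.card_powersetCard, Finset.card_erase_of_mem (Finset.mem_univ k),
      Finset.card_univ, Fintype.card_fin]
  rw [← this]
  apply Finset.card_bij (fun s _ => s.erase k)
  · intro s hs
    simp only [Finset.mem_filter, Finset.mem_powersetCard] at hs ⊢
    constructor
    · intro x hx
      simp only [Finset.mem_erase] at hx ⊢
      exact ⟨hx.1, Finset.mem_univ x⟩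
    · rw [Finset.card_erase_of_mem hs.2, hs.1.2]
  · intro s hs t ht hst
    simp only [Finset.mem_filter] at hs ht
    rw [← Finset.insert_erase hs.2, ← Finset.insert_erase ht.2, hst]
  · intro t ht
    rw [Finset.mem_powersetCard] at ht
    have hk : k ∉ t := fun h => (Finset.mem_erase.mp (ht.1 h)).1 rfl
    refine ⟨insert k t, ?_, ?_⟩
    · simp only [Finset.mem_filter, Finset.mem_powersetCard]
      refine ⟨⟨Finset.subset_univ _, ?_⟩, Finset.mem_insert_self k t⟩
      rw [Finset.card_insert_of_notMem hk, ht.2]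
      omega
    · rw [Finset.erase_insert hk]

lemma sum_aux {N j : ℕ} (hj1 : 1 ≤ j) (f : Fin N → ℂ) :
    ∑ s ∈ Finset.univ.powersetCard j, ∑ k ∈ s, f k
      = (Nat.choose (N-1) (j-1) : ℂ) * ∑ k, f k := by
  have : ∀ s ∈ Finset.univ.powersetCard j, ∑ k ∈ s, f k = ∑ k, if k ∈ s then f k else 0 := by
    intro s _
    rw [Finset.sum_ite_mem, Finset.univ_inter]
  rw [Finset.sum_congr rfl this, Finset.sum_comm, Finset.mul_sum]
  apply Finset.sum_congr rfl
  intro k _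
  rw [Finset.sum_ite, Finset.sum_const_zero, add_zero, Finset.sum_const,
    count_aux hj1 k, nsmul_eq_mul]

/-- The sum of all `j × j` principal minors of a square matrix `M`. -/
noncomputable def principalMinorSum {n : ℕ} (j : ℕ)
    (M : Matrix (Fin n) (Fin n) ℂ) : ℂ :=
  ∑ s ∈ Finset.univ.powersetCard j,
    (M.submatrix (fun i : (s : Finset (Fin n)) => (i : Fin n))
      (fun i : (s : Finset (Fin n)) => (i : Fin n))).det

theorem principal_minor_sum_vanishes_for_L
    (m n : ℕ) (hm : 0 < m) (hn : 0 < n)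
    (U : Matrix (Fin m) (Fin n) ℂ) (hU : U * Uᴴ = 1)
    (u : Fin (m * n) → ℂ)
    (hu : u = fun k => U (finProdFinEquiv.symm k).1 (finProdFinEquiv.symm k).2)
    (j : ℕ) (hj1 : 1 ≤ j) (hj : j ≤ m * n)
    (L : Matrix (Fin (m * n)) (Fin (m * n)) ℂ)
    (hL : L = (-((n : ℂ) / (j : ℂ))) • (1 : Matrix (Fin (m * n)) (Fin (m * n)) ℂ)
        + ((n : ℂ) / (j : ℂ)) ^ 2 •
            Matrix.of (fun k l => (starRingEnd ℂ) (u k) * u l)) :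
    principalMinorSum j L =
        ((Nat.choose (m * n) j : ℂ) *
            (1 - ((n : ℂ) / (j : ℂ)) * ∑ k, u k * (starRingEnd ℂ) (u k))
          + (Nat.choose (m * n) j : ℂ) *
            ((n : ℂ) * ((m : ℂ) * (n : ℂ) - (j : ℂ)) / ((j : ℂ) * ((m : ℂ) * (n : ℂ)))) * (m : ℂ))
          * (-((n : ℂ) / (j : ℂ))) ^ j
      ∧ principalMinorSum j L = 0 := by
  have hjne : (j : ℂ) ≠ 0 := Nat.cast_ne_zero.mpr (by omega)
  have hnne : (n : ℂ) ≠ 0 := Nat.cast_ne_zero.mpr hn.ne'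
  have hmne : (m : ℂ) ≠ 0 := Nat.cast_ne_zero.mpr hm.ne'
  set c : ℂ := (n : ℂ) / (j : ℂ) with hc
  have hcne : c ≠ 0 := div_ne_zero hnne hjne
  have hane : -c ≠ 0 := neg_ne_zero.mpr hcne
  -- trace identity : ∑ k, u k * conj (u k) = m
  have htrace : ∑ k, u k * (starRingEnd ℂ) (u k) = (m : ℂ) := by
    subst hu
    rw [← Equiv.sum_comp finProdFinEquiv (fun k =>
      U (finProdFinEquiv.symm k).1 (finProdFinEquiv.symm k).2 *
      (starRingEnd ℂ) (U (finProdFinEquiv.symm k).1 (finProdFinEquiv.symm k).2))]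
    simp only [Equiv.symm_apply_apply]
    rw [Fintype.sum_prod_type]
    have : ∀ i : Fin m, ∑ l : Fin n, U i l * (starRingEnd ℂ) (U i l) = 1 := by
      intro i
      have := congrFun (congrFun hU i) i
      simpa [Matrix.mul_apply, Matrix.one_apply, Matrix.conjTranspose_apply] using this
    rw [Finset.sum_congr rfl (fun i _ => this i)]
    simp
  have htrace' : ∑ k, (starRingEnd ℂ) (u k) * u k = (m : ℂ) := by
    rw [← htrace]; exact Finset.sum_congr rfl (fun k _ => mul_comm _ _)
  -- each principal minor
  have hdet : ∀ s ∈ (Finset.univ : Finset (Fin (m*n))).powersetCard j,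
      (L.submatrix (fun i : (s : Finset (Fin (m*n))) => (i : Fin (m*n)))
        (fun i : (s : Finset (Fin (m*n))) => (i : Fin (m*n)))).det
      = (-c) ^ j + (-c) ^ (j-1) * ∑ k ∈ s, c^2 * (starRingEnd ℂ) (u k) * u k := by
    intro s hs
    have hscard : s.card = j := (Finset.mem_powersetCard.mp hs).2
    have hsub : L.submatrix (fun i : (s : Finset (Fin (m*n))) => (i : Fin (m*n)))
        (fun i : (s : Finset (Fin (m*n))) => (i : Fin (m*n)))
        = (-c) • (1 : Matrix (s : Finset (Fin (m*n))) (s : Finset (Fin (m*n))) ℂ)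
          + Matrix.of (fun i k : (s : Finset (Fin (m*n))) =>
              (c^2 * (starRingEnd ℂ) (u i)) * u k) := by
      ext i k
      simp only [Matrix.submatrix_apply, hL, Matrix.add_apply, Matrix.smul_apply,
        Matrix.of_apply, smul_eq_mul]
      have h1 : (1 : Matrix (Fin (m*n)) (Fin (m*n)) ℂ) (i : Fin (m*n)) (k : Fin (m*n))
          = (1 : Matrix (s : Finset (Fin (m*n))) (s : Finset (Fin (m*n))) ℂ) i k := by
        by_cases h : i = k
        · subst h; simp
        · rw [Matrix.one_apply_ne (fun hik => h (Subtype.ext hik)), Matrix.one_apply_ne h]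
      rw [h1]
      ring
    rw [hsub, det_aux (-c) hane, Fintype.card_coe, hscard,
      ← Finset.sum_coe_sort s (fun k => c^2 * (starRingEnd ℂ) (u k) * u k)]
  have hsum : principalMinorSum j L
      = (Nat.choose (m*n) j : ℂ) * (-c)^j
        + (-c)^(j-1) * ((Nat.choose (m*n-1) (j-1) : ℂ) * ∑ k, c^2 * (starRingEnd ℂ) (u k) * u k) := by
    rw [principalMinorSum, Finset.sum_congr rfl hdet, Finset.sum_add_distrib,
      Finset.sum_const, Finset.card_powersetCard, Finset.card_univ, Fintype.card_fin,
      nsmul_eq_mul, ← Finset.mul_sum, sum_aux hj1]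
  -- choose identity
  have hchoose : (j : ℂ) * (Nat.choose (m*n) j : ℂ)
      = ((m*n : ℕ) : ℂ) * (Nat.choose (m*n-1) (j-1) : ℂ) := by
    have h1 : j * Nat.choose (m*n) j = (m*n) * Nat.choose (m*n-1) (j-1) := by
      have := Nat.add_one_mul_choose_eq (m*n-1) (j-1)
      have hmn : 1 ≤ m*n := Nat.one_le_iff_ne_zero.mpr (Nat.mul_ne_zero hm.ne' hn.ne')
      have e1 : (m*n-1) + 1 = m*n := by omega
      have e2 : (j-1) + 1 = j := by omega
      rw [e1, e2] at this
      exact (mul_comm j _).trans this.symm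
    exact_mod_cast congrArg (Nat.cast : ℕ → ℂ) h1
  have hpow : (-c)^(j-1) * (-c) = (-c)^j := by
    rw [← pow_succ]; congr 1; omega
  have hS : ∑ k, c^2 * (starRingEnd ℂ) (u k) * u k = c^2 * (m : ℂ) := by
    rw [← htrace', Finset.mul_sum]
    exact Finset.sum_congr rfl (fun k _ => by ring)
  have hmn1 : ((m*n : ℕ) : ℂ) = (m : ℂ) * (n : ℂ) := by push_cast; ring
  have hmnne : (m : ℂ) * (n : ℂ) ≠ 0 := mul_ne_zero hmne hnne
  -- main computation: LHS = B * (-c)^j where B is the bracket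
  have key : principalMinorSum j L
      = ((Nat.choose (m * n) j : ℂ) * (1 - c * (m:ℂ))
          + (Nat.choose (m * n) j : ℂ) *
            ((n : ℂ) * ((m : ℂ) * (n : ℂ) - (j : ℂ)) / ((j : ℂ) * ((m : ℂ) * (n : ℂ)))) * (m : ℂ))
          * (-c) ^ j := by
    rw [hsum, hS]
    have expand : (-c)^(j-1) * (c^2 * (m:ℂ)) = (-c)^j * (-(c * (m:ℂ))) := by
      rw [← hpow]; ring
    rw [mul_comm ((Nat.choose (m*n-1) (j-1) : ℂ)) (c^2 * (m:ℂ)), ← mul_assoc, expand]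
    have hchoose' : (j:ℂ) * (Nat.choose (m*n) j : ℂ)
        = (m:ℂ) * (n:ℂ) * (Nat.choose (m*n-1) (j-1) : ℂ) := by
      rw [← hmn1]; exact hchoose
    have hbr : (Nat.choose (m*n) j : ℂ) * (1 - c*(m:ℂ))
        + (Nat.choose (m*n) j : ℂ) *
          ((n:ℂ)*((m:ℂ)*(n:ℂ)-(j:ℂ))/((j:ℂ)*((m:ℂ)*(n:ℂ))))*(m:ℂ)
        = (Nat.choose (m*n) j : ℂ) - c*(m:ℂ)*(Nat.choose (m*n-1) (j-1) : ℂ) := by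
      rw [hc]
      field_simp
      linear_combination (-1 : ℂ) * hchoose'
    rw [hbr]
    ring
  constructor
  · rw [key, htrace]
  · rw [key]
    have hbracket : ((Nat.choose (m * n) j : ℂ) * (1 - c * (m:ℂ))
          + (Nat.choose (m * n) j : ℂ) *
            ((n : ℂ) * ((m : ℂ) * (n : ℂ) - (j : ℂ)) / ((j : ℂ) * ((m : ℂ) * (n : ℂ)))) * (m : ℂ)) = 0 := by
      rw [hc]
      field_simp
      ring
    rw [hbracket, zero_mul]
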